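/- Let (s_x^k, f_x^k) define infinite Leslie matrices M_k as above, with all m_{k,n}(x) > 0. Suppose d' ≥ 1 satisfies f_{x+i}^i ≤ d' f_i^i for all x, i ≥ 0, and d'' ≥ 1 satisfies s_x^0 s_{x+1}^1 ⋯ s_{x+i-1}^{i-1} ≤ d'' s_0^0 s_1^1 ⋯ s_{i-1}^{i-1} for all x ≥ 0, i ≥ 0 (including the full product i = n). Then for all n ≥ 1 and all x ≥ 0: m_{0,n}(x) ≤ d' d'' m_{0,n}(0), i.e., δ_0 (as ν) satisfies the minoration ν(m_{0,n}) ≥ (d'd'')^{-1} sup_x m_{0,n}(x). -/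

import Mathlib

/-- `leslieMass f s k j x = m_{k,k+j}(x)` for infinite Leslie matrices
`M_k(x,0) = f k x`, `M_k(x,x+1) = s k x`. -/
noncomputable def leslieMass (f s : ℕ → ℕ → ℝ) : ℕ → ℕ → ℕ → ℝ
  | _, 0, _ => 1
  | k, j + 1, x =>
      f k x * leslieMass f s (k + 1) j 0 + s k x * leslieMass f s (k + 1) j (x + 1)

lemma leslie_decomp (f s : ℕ → ℕ → ℝ) :
    ∀ n k x, leslieMass f s k n x =
      (∑ i ∈ Finset.range n, (∏ j ∈ Finset.range i, s (k + j) (x + j)) *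
        f (k + i) (x + i) * leslieMass f s (k + i + 1) (n - 1 - i) 0)
      + ∏ j ∈ Finset.range n, s (k + j) (x + j) := by
  intro n
  induction n with
  | zero => intro k x; simp [leslieMass]
  | succ n ih =>
    intro k x
    rw [show leslieMass f s k (n+1) x
        = f k x * leslieMass f s (k+1) n 0 + s k x * leslieMass f s (k+1) n (x+1) from rfl,
      ih (k+1) (x+1), Finset.sum_range_succ', Finset.prod_range_succ']
    have hsum : ∀ i ∈ Finset.range n,
        (∏ j ∈ Finset.range (i+1), s (k+j) (x+j)) * f (k+(i+1)) (x+(i+1)) *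
          leslieMass f s (k+(i+1)+1) (n+1-1-(i+1)) 0
        = s k x * ((∏ j ∈ Finset.range i, s (k+1+j) (x+1+j)) * f (k+1+i) (x+1+i) *
            leslieMass f s (k+1+i+1) (n-1-i) 0) := by
      intro i _
      rw [Finset.prod_range_succ']
      have h0 : n + 1 - 1 - (i+1) = n - 1 - i := by omega
      have hprod : ∏ j ∈ Finset.range i, s (k+(j+1)) (x+(j+1))
          = ∏ j ∈ Finset.range i, s (k+1+j) (x+1+j) := by
        apply Finset.prod_congr rfl; intro j _; congr 1 <;> omega
      have h1 : k+(i+1) = k+1+i := by omega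
      have h2 : x+(i+1) = x+1+i := by omega
      rw [h0, hprod, h1, h2]; simp only [Nat.add_zero]; ring
    rw [Finset.sum_congr rfl hsum, ← Finset.mul_sum]
    have hP : ∏ j ∈ Finset.range n, s (k+(j+1)) (x+(j+1))
        = ∏ j ∈ Finset.range n, s (k+1+j) (x+1+j) := by
      apply Finset.prod_congr rfl; intro j _; congr 1 <;> omega
    simp only [Nat.add_zero, Nat.add_sub_cancel, Nat.sub_zero, hP]
    ring

/-- If `f_{x+i}^i ≤ d' f_i^i` and `s_x^0 ⋯ s_{x+i-1}^{i-1} ≤ d'' s_0^0 ⋯ s_{i-1}^{i-1}`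
then `m_{0,n}(x) ≤ d' d'' m_{0,n}(0)` for all `n ≥ 1` and `x`, i.e. `ν = δ_0`
satisfies `ν(m_{0,n}) ≥ (d'd'')⁻¹ sup_x m_{0,n}(x)`. -/
theorem leslie_mass_comparison
    (f s : ℕ → ℕ → ℝ)
    (hf : ∀ k x, 0 ≤ f k x) (hs : ∀ k x, 0 ≤ s k x)
    (hpos : ∀ k j x, 0 < leslieMass f s k j x)
    (d' : ℝ) (hd'1 : 1 ≤ d') (hd' : ∀ i x : ℕ, f i (x + i) ≤ d' * f i i)
    (d'' : ℝ) (hd''1 : 1 ≤ d'')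
    (hd'' : ∀ x i : ℕ,
      (∏ j ∈ Finset.range i, s j (x + j)) ≤ d'' * ∏ j ∈ Finset.range i, s j j) :
    ∀ n : ℕ, 1 ≤ n → ∀ x : ℕ,
      leslieMass f s 0 n x ≤ d' * d'' * leslieMass f s 0 n 0 := by
  intro n _ x
  rw [leslie_decomp f s n 0 x, leslie_decomp f s n 0 0]
  simp only [Nat.zero_add]
  rw [mul_add, Finset.mul_sum]
  apply add_le_add
  · apply Finset.sum_le_sum
    intro i _
    have ha : (∏ j ∈ Finset.range i, s j (x + j)) ≤ d'' * ∏ j ∈ Finset.range i, s j j :=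
      hd'' x i
    have hb : f i (x + i) ≤ d' * f i i := hd' i x
    have ha0 : (0:ℝ) ≤ ∏ j ∈ Finset.range i, s j (x + j) :=
      Finset.prod_nonneg fun j _ => hs j (x + j)
    have h1 : (∏ j ∈ Finset.range i, s j (x + j)) * f i (x + i)
        ≤ (d'' * ∏ j ∈ Finset.range i, s j j) * (d' * f i i) :=
      mul_le_mul ha hb (hf i (x + i)) (le_trans ha0 ha)
    have h2 := mul_le_mul_of_nonneg_right h1 (hpos (i+1) (n-1-i) 0).le
    calc (∏ j ∈ Finset.range i, s j (x + j)) * f i (x + i) *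
          leslieMass f s (i+1) (n-1-i) 0
        ≤ (d'' * ∏ j ∈ Finset.range i, s j j) * (d' * f i i) *
          leslieMass f s (i+1) (n-1-i) 0 := h2
      _ = d' * d'' * ((∏ j ∈ Finset.range i, s j j) * f i i *
          leslieMass f s (i+1) (n-1-i) 0) := by ring
  · calc (∏ j ∈ Finset.range n, s j (x + j))
        ≤ d'' * ∏ j ∈ Finset.range n, s j j := hd'' x n
      _ = 1 * (d'' * ∏ j ∈ Finset.range n, s j j) := by ring
      _ ≤ d' * (d'' * ∏ j ∈ Finset.range n, s j j) := by
          apply mul_le_mul_of_nonneg_right hd'1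
          exact mul_nonneg (le_trans zero_le_one hd''1)
            (Finset.prod_nonneg fun j _ => hs j j)
      _ = d' * d'' * ∏ j ∈ Finset.range n, s j j := by ring
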